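/- (Existence and uniqueness of the boundary along rays.) For every direction d ∈ (0,∞)^n there exists a unique λ > 0 such that h(λ d) = 1. -/

import Mathlib

open Finset

noncomputable def hfun (n : ℕ) (a : ℝ) (x : Fin n → ℝ) : ℝ :=
  (∑ i, x i / (1 + x i)) + (1 - a) / ∏ j, (1 + x j)

lemma prod_sub_prod_le_sum {ι : Type*} (F : Finset ι) (s t : ι → ℝ)
    (h0 : ∀ i ∈ F, 0 ≤ s i) (hst : ∀ i ∈ F, s i ≤ t i) (h1 : ∀ i ∈ F, t i ≤ 1) :
    (∏ i ∈ F, t i) - (∏ i ∈ F, s i) ≤ ∑ i ∈ F, (t i - s i) := by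
  induction F using Finset.cons_induction with
  | empty => simp
  | cons i F hi ih =>
    simp only [Finset.prod_cons, Finset.sum_cons]
    have h0' := fun j hj => h0 j (Finset.mem_cons_of_mem hj)
    have hst' := fun j hj => hst j (Finset.mem_cons_of_mem hj)
    have h1' := fun j hj => h1 j (Finset.mem_cons_of_mem hj)
    have hmem : i ∈ Finset.cons i F hi := by simp
    have hPs0 : 0 ≤ ∏ j ∈ F, s j := Finset.prod_nonneg h0'
    have hPs1 : ∏ j ∈ F, s j ≤ 1 :=
      Finset.prod_le_one h0' (fun j hj => le_trans (hst' j hj) (h1' j hj))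
    have hPst : ∏ j ∈ F, s j ≤ ∏ j ∈ F, t j := Finset.prod_le_prod h0' hst'
    have hti1 : t i ≤ 1 := h1 i hmem
    have hsi : s i ≤ t i := hst i hmem
    have hsi0 : 0 ≤ s i := h0 i hmem
    have ihe := ih h0' hst' h1'
    nlinarith [hPst, hPs1, hti1, hsi, hsi0, ihe]

theorem stmt18 (n : ℕ) (hn : 2 ≤ n) (a : ℝ) (ha0 : 0 < a) (ha1 : a < 1)
    (d : Fin n → ℝ) (hd : ∀ i, 0 < d i) :
    ∃! lam : ℝ, 0 < lam ∧ hfun n a (lam • d) = 1 := by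
  have hne : (Finset.univ : Finset (Fin n)).Nonempty :=
    ⟨⟨0, by omega⟩, Finset.mem_univ _⟩
  set f : ℝ → ℝ := fun lam => hfun n a (lam • d) with hf
  have hpos : ∀ lam : ℝ, 0 ≤ lam → ∀ i, 0 < 1 + lam * d i := by
    intro lam hl i
    have := mul_nonneg hl (hd i).le
    linarith
  have hval : ∀ lam : ℝ, 0 ≤ lam →
      f lam = n - (∑ i, (1 + lam * d i)⁻¹) + (1 - a) * ∏ j, (1 + lam * d j)⁻¹ := by
    intro lam hl
    simp only [hf, hfun, Pi.smul_apply, smul_eq_mul]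
    rw [div_eq_mul_inv, ← Finset.prod_inv_distrib]
    congr 1
    have key : ∀ i, lam * d i / (1 + lam * d i) = 1 - (1 + lam * d i)⁻¹ := by
      intro i
      have h := (hpos lam hl i).ne'
      field_simp
      ring
    rw [Finset.sum_congr rfl (fun i _ => key i), Finset.sum_sub_distrib,
      Finset.sum_const, Finset.card_univ, Fintype.card_fin]
    simp [sub_eq_add_neg]
  -- strict monotonicity
  have hmono : ∀ lam mu : ℝ, 0 ≤ lam → lam < mu → f lam < f mu := by
    intro lam mu hl hlm
    have hm : 0 ≤ mu := le_trans hl hlm.le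
    set u : Fin n → ℝ := fun i => (1 + lam * d i)⁻¹ with hu
    set v : Fin n → ℝ := fun i => (1 + mu * d i)⁻¹ with hv
    have hv0 : ∀ i, 0 < v i := fun i => inv_pos.mpr (hpos mu hm i)
    have hvu : ∀ i, v i < u i := by
      intro i
      apply inv_strictAnti₀ (hpos lam hl i)
      have := (hd i)
      nlinarith
    have hu1 : ∀ i, u i ≤ 1 := by
      intro i
      rw [hu]
      apply inv_le_one_of_one_le₀
      have := mul_nonneg hl (hd i).le
      linarith
    have hP : ∏ i, v i < ∏ i, u i :=
      Finset.prod_lt_prod_of_nonempty (fun i _ => hv0 i) (fun i _ => hvu i) hne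
    have hS : (∏ i, u i) - (∏ i, v i) ≤ (∑ i, u i) - (∑ i, v i) := by
      have := prod_sub_prod_le_sum Finset.univ v u (fun i _ => (hv0 i).le)
        (fun i _ => (hvu i).le) (fun i _ => hu1 i)
      rwa [Finset.sum_sub_distrib] at this
    rw [hval lam hl, hval mu hm]
    have hPd : 0 < (∏ i, u i) - (∏ i, v i) := sub_pos.mpr hP
    nlinarith [mul_pos ha0 hPd]
  -- value at 0
  have hf0 : f 0 = 1 - a := by
    rw [hval 0 le_rfl]
    simp
  -- big lambda
  set M : ℝ := ∑ i, (d i)⁻¹ with hM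
  have hM0 : 0 < M :=
    Finset.sum_pos (fun i _ => inv_pos.mpr (hd i)) hne
  have hMi : ∀ i, 1 ≤ M * d i := by
    intro i
    have h1 : (d i)⁻¹ ≤ M :=
      Finset.single_le_sum (fun j _ => (inv_pos.mpr (hd j)).le) (Finset.mem_univ i)
    calc (1:ℝ) = (d i)⁻¹ * d i := (inv_mul_cancel₀ (hd i).ne').symm
    _ ≤ M * d i := by apply mul_le_mul_of_nonneg_right h1 (hd i).le
  have hfM : 1 < f M := by
    have hprodpos : 0 < ∏ j, (1 + M * d j) :=
      Finset.prod_pos (fun j _ => hpos M hM0.le j)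
    have hterm : ∀ i, (1:ℝ)/2 ≤ M * d i / (1 + M * d i) := by
      intro i
      rw [div_le_div_iff₀ (by norm_num) (hpos M hM0.le i)]
      linarith [hMi i]
    have hsum : (n : ℝ) / 2 ≤ ∑ i, M * d i / (1 + M * d i) := by
      calc (n:ℝ)/2 = ∑ _i : Fin n, (1:ℝ)/2 := by
            simp [Finset.sum_const, Finset.card_univ]
            ring
      _ ≤ _ := Finset.sum_le_sum (fun i _ => hterm i)
    have hlast : 0 < (1 - a) / ∏ j, (1 + M * d j) :=
      div_pos (by linarith) hprodpos
    have hfMeq : f M = (∑ i, M * d i / (1 + M * d i)) + (1 - a) / ∏ j, (1 + M * d j) := by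
      simp [hf, hfun, smul_eq_mul]
    rw [hfMeq]
    have hn' : (2:ℝ) ≤ n := by exact_mod_cast hn
    nlinarith
  -- continuity
  have hfeq : f = fun lam => (∑ i, lam * d i / (1 + lam * d i)) +
      (1 - a) / ∏ j, (1 + lam * d j) := by
    funext lam
    simp [hf, hfun, smul_eq_mul]
  have hcont : ContinuousOn f (Set.Icc 0 M) := by
    rw [hfeq]
    apply ContinuousOn.add
    · apply continuousOn_finset_sum
      intro i _
      apply ContinuousOn.div
      · fun_prop
      · fun_prop
      · intro x hx
        exact (hpos x hx.1 i).ne'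
    · apply ContinuousOn.div
      · fun_prop
      · apply continuousOn_finset_prod
        intro j _
        fun_prop
      · intro x hx
        exact (Finset.prod_pos (fun j _ => hpos x hx.1 j)).ne'
  -- IVT
  have hmem : (1:ℝ) ∈ Set.Icc (f 0) (f M) := by
    constructor
    · rw [hf0]; linarith
    · linarith
  obtain ⟨lam, hlamI, hflam⟩ := intermediate_value_Icc hM0.le hcont hmem
  have hlam0 : 0 < lam := by
    rcases lt_or_eq_of_le hlamI.1 with h | h
    · exact h
    · exfalso
      rw [← h] at hflam
      rw [hf0] at hflam
      linarith
  refine ⟨lam, ⟨hlam0, hflam⟩, ?_⟩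
  rintro mu ⟨hmu0, hmu1⟩
  have hmu1' : f mu = 1 := hmu1
  rcases lt_trichotomy mu lam with h | h | h
  · exfalso
    have := hmono mu lam hmu0.le h
    rw [hmu1', hflam] at this
    exact lt_irrefl _ this
  · exact h
  · exfalso
    have := hmono lam mu hlam0.le h
    rw [hmu1', hflam] at this
    exact lt_irrefl _ this
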